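/- Let k be a field, and let A_n be the n × (n+1) matrix over the polynomial ring k[X,Y] with A[i][i] = X, A[i][i+1] = Y, and zeros elsewhere. Then A_n is not equivalent over k to a block diagonal matrix: there do not exist invertible matrices P ∈ GL_n(k) and Q ∈ GL_{n+1}(k) and a splitting with 0 < t < n+1 columns in the first block such that P·A_n·Q = diag(B, C), where B has s rows and t columns and C has n−s rows and n+1−t columns. -/

import Mathlib

open Matrix Polynomial



lemma stmt10_pow_indep {k : Type*} [Field k] (m : ℕ) (a : Fin m → k)
    (h : ∑ j : Fin m, algebraMap k (RatFunc k) (a j) * RatFunc.X ^ (j : ℕ) = 0) :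
    ∀ j, a j = 0 := by
  have h2 : (algebraMap (Polynomial k) (RatFunc k))
      (∑ j : Fin m, Polynomial.C (a j) * Polynomial.X ^ (j : ℕ)) = 0 := by
    rw [map_sum]
    simpa [RatFunc.algebraMap_eq_C] using h
  have h3 : (∑ j : Fin m, Polynomial.C (a j) * Polynomial.X ^ (j : ℕ)) = 0 :=
    RatFunc.algebraMap_injective k (by simpa using h2)
  intro j
  have h4 := congrArg (fun p => Polynomial.coeff p (j : ℕ)) h3
  simp only [Polynomial.finset_sum_coeff, Polynomial.coeff_C_mul,
    Polynomial.coeff_X_pow, Polynomial.coeff_zero, mul_ite, mul_one, mul_zero] at h4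
  rwa [Finset.sum_eq_single j (fun b _ hb => by
      rw [if_neg (fun h => hb (Fin.ext h.symm))]) (by simp), if_pos rfl] at h4

lemma stmt10_exists_ker {F : Type*} [Field F] {r c : ℕ} (h : r < c)
    (M : Matrix (Fin r) (Fin c) F) : ∃ u, u ≠ 0 ∧ M.mulVec u = 0 := by
  have hni : ¬ Function.Injective M.mulVecLin := by
    intro hinj
    have := LinearMap.finrank_le_finrank_of_injective hinj
    simp [Module.finrank_pi] at this
    omega
  rw [← LinearMap.ker_eq_bot] at hni
  obtain ⟨u, hu, hune⟩ := Submodule.exists_mem_ne_zero_of_ne_bot hni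
  exact ⟨u, hune, by simpa [Matrix.mulVecLin_apply] using hu⟩

lemma stmt10_aux {k : Type*} [Field k] (n : ℕ)
    (Q Qi : Matrix (Fin (n + 1)) (Fin (n + 1)) k) (hQi : Qi * Q = 1)
    (v w : Fin (n + 1) → RatFunc k)
    (hv : ∀ i : Fin n, RatFunc.X * v i.castSucc + v i.succ = 0)
    (hw : w = (Qi.map (algebraMap k (RatFunc k))).mulVec v)
    (ρ : Fin (n + 1)) (hρ : w ρ = 0) (hwne : w ≠ 0) : False := by
  have vj : ∀ j : Fin (n + 1), v j = (-RatFunc.X) ^ (j : ℕ) * v 0 := by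
    intro j
    induction j using Fin.induction with
    | zero => simp
    | succ i ih =>
      have := hv i
      have hvs : v i.succ = -RatFunc.X * v i.castSucc := by linear_combination this
      rw [hvs, ih]
      simp [Fin.val_succ, pow_succ]
      ring
  have hv0 : v 0 ≠ 0 := by
    intro h0
    apply hwne
    have : v = 0 := funext fun j => by rw [vj j, h0, mul_zero]; rfl
    rw [hw, this]
    simp
  have hsum : (∑ j : Fin (n+1), algebraMap k (RatFunc k) ((-1) ^ (j : ℕ) * Qi ρ j) * RatFunc.X ^ (j : ℕ)) * v 0 = 0 := by
    rw [← hρ, hw, Matrix.mulVec, dotProduct, Finset.sum_mul]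
    refine Finset.sum_congr rfl fun j _ => ?_
    rw [vj j, Matrix.map_apply, _root_.map_mul, _root_.map_pow, _root_.map_neg,
      _root_.map_one, neg_pow RatFunc.X]
    ring
  have hzero := stmt10_pow_indep (n + 1) _ ((mul_eq_zero.mp hsum).resolve_right hv0)
  have h1 : (Qi * Q) ρ ρ = 1 := by rw [hQi]; simp
  rw [Matrix.mul_apply] at h1
  have : ∀ j, Qi ρ j = 0 := by
    intro j
    have hj := hzero j
    rcases mul_eq_zero.mp hj with h | h
    · exact absurd h (pow_ne_zero _ (by norm_num))
    · exact h
  simp [this] at h1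

lemma stmt10_main {k : Type*} [Field k] (n : ℕ)
    (A' : Matrix (Fin n) (Fin (n + 1)) (RatFunc k))
    (hA' : ∀ i j, A' i j = if j = i.castSucc then RatFunc.X
      else if j = i.succ then (1 : RatFunc k) else 0)
    (P : Matrix (Fin n) (Fin n) k) (Q : Matrix (Fin (n + 1)) (Fin (n + 1)) k)
    (hP : IsUnit P) (hQ : IsUnit Q)
    (D : Matrix (Fin n) (Fin (n + 1)) (RatFunc k))
    (hD : P.map (algebraMap k (RatFunc k)) * A' * Q.map (algebraMap k (RatFunc k)) = D)
    (w : Fin (n + 1) → RatFunc k) (hw0 : D.mulVec w = 0) (hwne : w ≠ 0)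
    (ρ : Fin (n + 1)) (hρ : w ρ = 0) : False := by
  obtain ⟨Pu, hPu⟩ := hP
  obtain ⟨Qu, hQu⟩ := hQ
  set Pi := (↑Pu⁻¹ : Matrix (Fin n) (Fin n) k) with hPidef
  set Qi := (↑Qu⁻¹ : Matrix (Fin (n + 1)) (Fin (n + 1)) k) with hQidef
  have hPiP : Pi * P = 1 := by rw [← hPu]; exact Pu.inv_mul
  have hQiQ : Qi * Q = 1 := by rw [← hQu]; exact Qu.inv_mul
  have hPiP' : Pi.map (algebraMap k (RatFunc k)) * P.map (algebraMap k (RatFunc k)) = 1 := by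
    have h := congrArg (fun M => Matrix.map M ⇑(algebraMap k (RatFunc k))) hPiP
    simp only [Matrix.map_mul] at h
    rw [h, Matrix.map_one _ (map_zero _) (map_one _)]
  have hQiQ' : Qi.map (algebraMap k (RatFunc k)) * Q.map (algebraMap k (RatFunc k)) = 1 := by
    have h := congrArg (fun M => Matrix.map M ⇑(algebraMap k (RatFunc k))) hQiQ
    simp only [Matrix.map_mul] at h
    rw [h, Matrix.map_one _ (map_zero _) (map_one _)]
  set v := (Q.map (algebraMap k (RatFunc k))).mulVec w with hvdef
  have hAv : A'.mulVec v = 0 := by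
    have h0 : (P.map (algebraMap k (RatFunc k)) * A' * Q.map (algebraMap k (RatFunc k))).mulVec w
        = 0 := by rw [hD]; exact hw0
    rw [Matrix.mul_assoc, ← Matrix.mulVec_mulVec, ← Matrix.mulVec_mulVec] at h0
    have h1 : (Pi.map (algebraMap k (RatFunc k))).mulVec
        ((P.map (algebraMap k (RatFunc k))).mulVec
          (A'.mulVec ((Q.map (algebraMap k (RatFunc k))).mulVec w))) = 0 := by
      rw [h0, Matrix.mulVec_zero]
    rw [Matrix.mulVec_mulVec, hPiP', Matrix.one_mulVec] at h1
    exact h1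
  have hv : ∀ i : Fin n, RatFunc.X * v i.castSucc + v i.succ = 0 := by
    intro i
    have h := congrFun hAv i
    have hne : i.castSucc ≠ i.succ := (Fin.castSucc_lt_succ : i.castSucc < i.succ).ne
    calc RatFunc.X * v i.castSucc + v i.succ
        = ∑ j : Fin (n + 1), ((if j = i.castSucc then RatFunc.X * v j else 0)
            + (if j = i.succ then v j else 0)) := by
          rw [Finset.sum_add_distrib, Finset.sum_ite_eq' Finset.univ i.castSucc,
            Finset.sum_ite_eq' Finset.univ i.succ]
          simp
      _ = ∑ j : Fin (n + 1), A' i j * v j := by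
          refine Finset.sum_congr rfl fun j _ => ?_
          rw [hA']
          split_ifs <;> simp_all
      _ = 0 := h
  have hwv : w = (Qi.map (algebraMap k (RatFunc k))).mulVec v := by
    rw [hvdef, Matrix.mulVec_mulVec, hQiQ', Matrix.one_mulVec]
  exact stmt10_aux n Q Qi hQiQ v w hv hwv ρ hρ hwne


/-- The `n × (n+1)` matrix over `k[X,Y]` with `X` on the diagonal and `Y` on
the superdiagonal is not equivalent, via invertible matrices `P ∈ GL_n(k)`, `Q ∈ GL_{n+1}(k)`
with entries in `k`, to a block diagonal matrix `diag(B, C)` with `0 < t < n+1` columns in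
the first block. -/
theorem stmt10 (k : Type*) [Field k] (n : ℕ)
    (A : Matrix (Fin n) (Fin (n + 1)) (MvPolynomial (Fin 2) k))
    (hA : ∀ i j, A i j = if j = i.castSucc then MvPolynomial.X 0
      else if j = i.succ then MvPolynomial.X 1 else 0) :
    ¬ ∃ (s t : ℕ) (hs : s ≤ n) (ht0 : 0 < t) (htv : t < n + 1)
        (P : Matrix (Fin n) (Fin n) k) (Q : Matrix (Fin (n + 1)) (Fin (n + 1)) k)
        (B : Matrix (Fin s) (Fin t) (MvPolynomial (Fin 2) k))
        (C : Matrix (Fin (n - s)) (Fin (n + 1 - t)) (MvPolynomial (Fin 2) k)),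
      IsUnit P ∧ IsUnit Q ∧
      P.map (algebraMap k (MvPolynomial (Fin 2) k)) * A *
          Q.map (algebraMap k (MvPolynomial (Fin 2) k)) =
        Matrix.reindex (finSumFinEquiv.trans (finCongr (Nat.add_sub_cancel' hs)))
          (finSumFinEquiv.trans (finCongr (Nat.add_sub_cancel' htv.le)))
          (Matrix.fromBlocks B 0 0 C) := by
  rintro ⟨s, t, hs, ht0, htv, P, Q, B, C, hP, hQ, heq⟩
  classical
  set φ : MvPolynomial (Fin 2) k →+* RatFunc k :=
    MvPolynomial.eval₂Hom (algebraMap k (RatFunc k))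
      (fun i => if i = 0 then RatFunc.X else 1) with hφdef
  have hφC : (⇑φ ∘ ⇑(algebraMap k (MvPolynomial (Fin 2) k))) = ⇑(algebraMap k (RatFunc k)) := by
    funext a
    simp [hφdef, MvPolynomial.algebraMap_eq]
  have hA' : ∀ i j, (A.map ⇑φ) i j = if j = i.castSucc then RatFunc.X
      else if j = i.succ then (1 : RatFunc k) else 0 := by
    intro i j
    rw [Matrix.map_apply, hA]
    split_ifs <;> simp [hφdef]
  set e1 := finSumFinEquiv.trans (finCongr (Nat.add_sub_cancel' hs)) with he1
  set e2 := finSumFinEquiv.trans (finCongr (Nat.add_sub_cancel' htv.le)) with he2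
  have heq2 := congrArg (fun M => Matrix.map M ⇑φ) heq
  simp only [Matrix.map_mul, Matrix.reindex_apply, ← Matrix.submatrix_map,
    Matrix.fromBlocks_map, Matrix.map_zero _ (map_zero φ), Matrix.map_map, hφC] at heq2
  set D := (Matrix.fromBlocks (B.map ⇑φ) 0 0 (C.map ⇑φ)).submatrix ⇑e1.symm ⇑e2.symm with hD
  rcases lt_or_ge s t with hst | hst
  · obtain ⟨u, hune, hu⟩ := stmt10_exists_ker hst (B.map ⇑φ)
    set w : Fin (n + 1) → RatFunc k := fun ρ => Sum.elim u 0 (e2.symm ρ) with hwdef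
    have hwe2 : w ∘ ⇑e2 = Sum.elim u 0 := by funext x; simp [hwdef]
    have hwD : D.mulVec w = 0 := by
      rw [hD, Matrix.submatrix_mulVec_equiv, Equiv.symm_symm, hwe2,
        Matrix.fromBlocks_mulVec]
      funext i
      simp [hu, Matrix.zero_mulVec, Matrix.mulVec_zero]
    have hwne : w ≠ 0 := by
      obtain ⟨j0, hj0⟩ := Function.ne_iff.mp hune
      intro hcontra
      apply hj0
      have h := congrFun hcontra (e2 (Sum.inl j0))
      simpa [hwdef] using h
    exact stmt10_main n (A.map ⇑φ) hA' P Q hP hQ D heq2 w hwD hwne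
      (e2 (Sum.inr ⟨0, by omega⟩)) (by simp [hwdef])
  · have hlt : n - s < n + 1 - t := by omega
    obtain ⟨u, hune, hu⟩ := stmt10_exists_ker hlt (C.map ⇑φ)
    set w : Fin (n + 1) → RatFunc k := fun ρ => Sum.elim (0 : Fin t → RatFunc k) u (e2.symm ρ) with hwdef
    have hwe2 : w ∘ ⇑e2 = Sum.elim (0 : Fin t → RatFunc k) u := by funext x; simp [hwdef]
    have hwD : D.mulVec w = 0 := by
      rw [hD, Matrix.submatrix_mulVec_equiv, Equiv.symm_symm, hwe2,
        Matrix.fromBlocks_mulVec]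
      funext i
      simp [hu, Matrix.zero_mulVec, Matrix.mulVec_zero]
    have hwne : w ≠ 0 := by
      obtain ⟨j0, hj0⟩ := Function.ne_iff.mp hune
      intro hcontra
      apply hj0
      have h := congrFun hcontra (e2 (Sum.inr j0))
      simpa [hwdef] using h
    exact stmt10_main n (A.map ⇑φ) hA' P Q hP hQ D heq2 w hwD hwne
      (e2 (Sum.inl ⟨0, ht0⟩)) (by simp [hwdef])
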